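/- If the gradient map of a convex differentiable function φ: ℝ^m → ℝ satisfies a Lipschitz condition with constant 1/γ, then the gradient map is co-coercive with constant γ: for all u, v ∈ ℝ^m, ⟨u - v, ∇φ(u) - ∇φ(v)⟩ ≥ γ‖∇φ(u) - ∇φ(v)‖². -/

import Mathlib

open scoped InnerProductSpace RealInnerProductSpace

section Aux

variable {E : Type*} [NormedAddCommGroup E] [InnerProductSpace ℝ E] [CompleteSpace E]

lemma BH_hasDerivAt_line (φ : E → ℝ) (hdiff : Differentiable ℝ φ) (x y : E) (t : ℝ) :
    HasDerivAt (fun s : ℝ => φ (x + s • (y - x)))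
      ⟪gradient φ (x + t • (y - x)), y - x⟫_ℝ t := by
  have h1 : HasDerivAt (fun s : ℝ => x + s • (y - x)) (y - x) t := by
    simpa using ((hasDerivAt_id t).smul_const (y - x)).const_add x
  have h2 : HasFDerivAt φ (InnerProductSpace.toDual ℝ E (gradient φ (x + t • (y - x))))
      (x + t • (y - x)) :=
    ((hdiff (x + t • (y - x))).hasGradientAt).hasFDerivAt
  have h3 := h2.comp_hasDerivAt t h1
  simp only [InnerProductSpace.toDual_apply_apply] at h3
  exact h3

/-- First-order condition for convexity. -/
lemma BH_convex_lower (φ : E → ℝ) (hconv : ConvexOn ℝ Set.univ φ)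
    (hdiff : Differentiable ℝ φ) (x y : E) :
    φ x + ⟪gradient φ x, y - x⟫_ℝ ≤ φ y := by
  have hg : ConvexOn ℝ Set.univ (fun t : ℝ => φ (x + t • (y - x))) := by
    have := hconv.comp_affineMap (AffineMap.lineMap x y)
    simp only [Set.preimage_univ] at this
    have e : (fun t : ℝ => φ (x + t • (y - x))) = φ ∘ AffineMap.lineMap x y := by
      funext t; simp [AffineMap.lineMap_apply, add_comm]
    rw [e]; exact this
  have hd := BH_hasDerivAt_line φ hdiff x y 0
  have := hg.le_slope_of_hasDerivAt (Set.mem_univ (0:ℝ)) (Set.mem_univ (1:ℝ)) zero_lt_one hd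
  simp [slope_def_field] at this ⊢
  linarith [this]

/-- Descent lemma. -/
lemma BH_descent (L : ℝ) (hL : 0 ≤ L) (φ : E → ℝ) (hdiff : Differentiable ℝ φ)
    (hlip : ∀ u v : E, ‖gradient φ u - gradient φ v‖ ≤ L * ‖u - v‖) (x y : E) :
    φ y ≤ φ x + ⟪gradient φ x, y - x⟫_ℝ + L / 2 * ‖y - x‖ ^ 2 := by
  set c : ℝ := ⟪gradient φ x, y - x⟫_ℝ with hc
  set F : ℝ → ℝ := fun t => φ (x + t • (y - x)) - t * c - L * t ^ 2 / 2 * ‖y - x‖ ^ 2 with hF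
  have hFd : ∀ t : ℝ, HasDerivAt F
      (⟪gradient φ (x + t • (y - x)), y - x⟫_ℝ - c - L * t * ‖y - x‖ ^ 2) t := by
    intro t
    have h1 := BH_hasDerivAt_line φ hdiff x y t
    have h2 : HasDerivAt (fun s : ℝ => s * c) c t := by
      simpa using (hasDerivAt_id t).mul_const c
    have h3 : HasDerivAt (fun s : ℝ => L * s ^ 2 / 2 * ‖y - x‖ ^ 2)
        (L * t * ‖y - x‖ ^ 2) t := by
      have := (((hasDerivAt_pow 2 t).const_mul L).div_const 2).mul_const (‖y - x‖ ^ 2)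
      refine this.congr_deriv ?_
      push_cast; ring
    exact (h1.sub h2).sub h3
  have hanti : AntitoneOn F (Set.Icc (0:ℝ) 1) := by
    apply antitoneOn_of_deriv_nonpos (convex_Icc 0 1)
    · exact fun t _ => ((hFd t).continuousAt).continuousWithinAt
    · intro t ht
      exact (hFd t).differentiableAt.differentiableWithinAt
    · intro t ht
      rw [interior_Icc] at ht
      rw [(hFd t).deriv]
      have hge : (0:ℝ) ≤ t := le_of_lt ht.1
      have h1 : ⟪gradient φ (x + t • (y - x)) - gradient φ x, y - x⟫_ℝ
          ≤ ‖gradient φ (x + t • (y - x)) - gradient φ x‖ * ‖y - x‖ :=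
        real_inner_le_norm _ _
      have h2 : ‖gradient φ (x + t • (y - x)) - gradient φ x‖ ≤ L * (t * ‖y - x‖) := by
        have hll := hlip (x + t • (y - x)) x
        have hsub : x + t • (y - x) - x = t • (y - x) := by abel
        rw [hsub, norm_smul, Real.norm_eq_abs, abs_of_nonneg hge] at hll
        linarith [hll]
      have h3 : ‖gradient φ (x + t • (y - x)) - gradient φ x‖ * ‖y - x‖
          ≤ L * (t * ‖y - x‖) * ‖y - x‖ :=
        mul_le_mul_of_nonneg_right h2 (norm_nonneg _)
      have h4 : ⟪gradient φ (x + t • (y - x)) - gradient φ x, y - x⟫_ℝ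
          = ⟪gradient φ (x + t • (y - x)), y - x⟫_ℝ - c := by
        rw [inner_sub_left]
      nlinarith [h1, h3, h4]
  have := hanti (Set.mem_Icc.mpr ⟨le_refl 0, zero_le_one⟩)
    (Set.mem_Icc.mpr ⟨zero_le_one, le_refl 1⟩) zero_le_one
  simp only [hF] at this
  simp only [zero_smul, add_zero, one_smul, one_pow, zero_pow, mul_zero, zero_mul,
    sub_zero, mul_one] at this
  have hxy : x + (y - x) = y := by abel
  rw [hxy] at this
  linarith [this]

end Aux

/-- if the gradient map of a convex differentiable `φ : ℝ^m → ℝ` is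
Lipschitz with constant `1/γ`, then it is co-coercive with constant `γ`
(Baillon–Haddad). -/
theorem statement3 {m : ℕ} (γ : ℝ) (hγ : 0 < γ) (φ : EuclideanSpace ℝ (Fin m) → ℝ)
    (hconv : ConvexOn ℝ Set.univ φ) (hdiff : Differentiable ℝ φ)
    (hlip : ∀ u v : EuclideanSpace ℝ (Fin m),
      ‖gradient φ u - gradient φ v‖ ≤ (1 / γ) * ‖u - v‖) :
    ∀ u v : EuclideanSpace ℝ (Fin m),
      ⟪u - v, gradient φ u - gradient φ v⟫_ℝ ≥ γ * ‖gradient φ u - gradient φ v‖ ^ 2 := by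
  have hLnn : (0:ℝ) ≤ 1 / γ := by positivity
  -- key inequality
  have key : ∀ u v : EuclideanSpace ℝ (Fin m),
      φ v + ⟪gradient φ v, u - v⟫_ℝ + γ / 2 * ‖gradient φ u - gradient φ v‖ ^ 2 ≤ φ u := by
    intro u v
    set gu := gradient φ u
    set gv := gradient φ v
    set w : EuclideanSpace ℝ (Fin m) := u - γ • (gu - gv) with hw
    have h1 := BH_convex_lower φ hconv hdiff v w
    have h2 := BH_descent (1/γ) hLnn φ hdiff hlip u w
    have hwu : w - u = -(γ • (gu - gv)) := by rw [hw]; abel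
    have hwv : w - v = (u - v) - γ • (gu - gv) := by rw [hw]; abel
    have e1 : ⟪gu, w - u⟫_ℝ = -(γ * ⟪gu, gu - gv⟫_ℝ) := by
      rw [hwu, inner_neg_right, real_inner_smul_right]
    have e2 : ‖w - u‖ ^ 2 = γ ^ 2 * ‖gu - gv‖ ^ 2 := by
      rw [hwu, norm_neg, norm_smul, mul_pow]
      simp [abs_of_pos hγ]
    have e3 : ⟪gv, w - v⟫_ℝ = ⟪gv, u - v⟫_ℝ - γ * ⟪gv, gu - gv⟫_ℝ := by
      rw [hwv, inner_sub_right, real_inner_smul_right]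
    have e4 : ⟪gu, gu - gv⟫_ℝ - ⟪gv, gu - gv⟫_ℝ = ‖gu - gv‖ ^ 2 := by
      rw [← inner_sub_left, real_inner_self_eq_norm_sq]
    rw [e3] at h1
    rw [e1, e2] at h2
    have hγne : γ ≠ 0 := ne_of_gt hγ
    have : 1 / γ / 2 * (γ ^ 2 * ‖gu - gv‖ ^ 2) = γ / 2 * ‖gu - gv‖ ^ 2 := by
      field_simp
    rw [this] at h2
    nlinarith [h1, h2, e4]
  intro u v
  have k1 := key u v
  have k2 := key v u
  have hrev : ‖gradient φ v - gradient φ u‖ = ‖gradient φ u - gradient φ v‖ :=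
    norm_sub_rev _ _
  rw [hrev] at k2
  have expand : ⟪gradient φ v, u - v⟫_ℝ + ⟪gradient φ u, v - u⟫_ℝ
      = -⟪u - v, gradient φ u - gradient φ v⟫_ℝ := by
    simp only [inner_sub_left, inner_sub_right]
    rw [real_inner_comm (gradient φ v) u, real_inner_comm (gradient φ v) v,
      real_inner_comm (gradient φ u) v, real_inner_comm (gradient φ u) u]
    ring
  have := add_le_add k1 k2
  rw [ge_iff_le]
  nlinarith [this, expand]
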